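/- For all integers N ≥ 2, Σ_{n=2}^N 1/n < ln N / ((N+1)·ln((N+1)/N)). -/

import Mathlib

open Finset

private lemma aux_hasDerivAt (x : ℝ) (hx : 1 < x) :
    HasDerivAt (fun x : ℝ => x * (Real.log x - Real.log (x - 1)))
      (1 * (Real.log x - Real.log (x - 1)) + x * (x⁻¹ - (x - 1)⁻¹)) x := by
  have hx0 : x ≠ 0 := by linarith
  have hx1 : x - 1 ≠ 0 := by intro h; nlinarith [h]
  have h1 : HasDerivAt Real.log x⁻¹ x := Real.hasDerivAt_log hx0
  have h2 : HasDerivAt (fun x : ℝ => Real.log (x - 1)) ((x - 1)⁻¹ * 1) x :=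
    by have := (Real.hasDerivAt_log hx1).comp x ((hasDerivAt_id x).sub_const 1); exact this
  have h2' : HasDerivAt (fun x : ℝ => Real.log (x - 1)) (x - 1)⁻¹ x := by
    simpa using h2
  exact (hasDerivAt_id x).mul (h1.sub h2')

private lemma aux_strictAnti :
    StrictAntiOn (fun x : ℝ => x * (Real.log x - Real.log (x - 1))) (Set.Ici 2) := by
  apply strictAntiOn_of_deriv_neg (convex_Ici 2)
  · intro x hx
    have hx1 : (1 : ℝ) < x := lt_of_lt_of_le one_lt_two hx
    exact (aux_hasDerivAt x hx1).continuousAt.continuousWithinAt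
  · intro x hx
    rw [interior_Ici] at hx
    have hx1 : (1 : ℝ) < x := lt_trans one_lt_two hx
    have hx0 : (0 : ℝ) < x := by linarith
    have hxm1 : (0 : ℝ) < x - 1 := by linarith
    rw [(aux_hasDerivAt x hx1).deriv]
    have hpos : (0 : ℝ) < x / (x - 1) := div_pos hx0 hxm1
    have hne : x / (x - 1) ≠ 1 := by
      intro h
      rw [div_eq_one_iff_eq (ne_of_gt hxm1)] at h
      linarith
    have hlog := Real.log_lt_sub_one_of_pos hpos hne
    have hld : Real.log (x / (x - 1)) = Real.log x - Real.log (x - 1) :=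
      Real.log_div (ne_of_gt hx0) (ne_of_gt hxm1)
    have hdiv : x / (x - 1) - 1 = 1 / (x - 1) := by field_simp; ring
    have hx_inv : x * (x⁻¹ - (x - 1)⁻¹) = 1 - x / (x - 1) := by field_simp
    have key : Real.log x - Real.log (x - 1) < 1 / (x - 1) := by
      rw [← hld]; rw [hdiv] at hlog; exact hlog
    have hfin : 1 / (x - 1) + (1 - x / (x - 1)) = 0 := by field_simp; ring
    nlinarith [key, hx_inv, hfin]

private lemma aux_telescope (N : ℕ) (hN : 2 ≤ N) :
    ∑ n ∈ Finset.Icc 2 N, (Real.log n - Real.log ((n : ℝ) - 1)) = Real.log N := by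
  induction N, hN using Nat.le_induction with
  | base => norm_num
  | succ N hN ih =>
    rw [Finset.sum_Icc_succ_top (by omega : 2 ≤ N + 1), ih]
    push_cast
    ring

theorem harmonic_sum_lt (N : ℕ) (hN : 2 ≤ N) :
    ∑ n ∈ Finset.Icc 2 N, (1 : ℝ) / n <
      Real.log N / (((N : ℝ) + 1) * Real.log (((N : ℝ) + 1) / N)) := by
  have hN0 : (0 : ℝ) < N := by positivity
  have hNR : (2 : ℝ) ≤ N := by exact_mod_cast hN
  set L : ℝ := ((N : ℝ) + 1) * Real.log (((N : ℝ) + 1) / N) with hLdef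
  have hL : 0 < L := by
    apply mul_pos (by linarith)
    apply Real.log_pos
    rw [lt_div_iff₀ hN0]
    linarith
  have hLeq : L = ((N : ℝ) + 1) * (Real.log ((N : ℝ) + 1) - Real.log N) := by
    rw [hLdef, Real.log_div (by linarith) (ne_of_gt hN0)]
  -- termwise bound
  have hterm : ∀ n ∈ Finset.Icc 2 N,
      (1 : ℝ) / n * L < Real.log n - Real.log ((n : ℝ) - 1) := by
    intro n hn
    rw [Finset.mem_Icc] at hn
    have hn2 : (2 : ℝ) ≤ n := by exact_mod_cast hn.1
    have hnN : (n : ℝ) ≤ N := by exact_mod_cast hn.2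
    have hn0 : (0 : ℝ) < n := by linarith
    have hmono := aux_strictAnti (Set.mem_Ici.mpr hn2)
      (Set.mem_Ici.mpr (by linarith : (2:ℝ) ≤ (N:ℝ)+1)) (by linarith : (n : ℝ) < (N : ℝ) + 1)
    simp only at hmono
    have hmono' : L < (n : ℝ) * (Real.log n - Real.log ((n : ℝ) - 1)) := by
      rw [hLeq]
      have : (N : ℝ) + 1 - 1 = (N : ℝ) := by ring
      rw [this] at hmono
      exact hmono
    rw [div_mul_eq_mul_div, one_mul, div_lt_iff₀ hn0]
    linarith [hmono']
  have hne : (Finset.Icc 2 N).Nonempty := Finset.nonempty_Icc.mpr hN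
  have hsum := Finset.sum_lt_sum_of_nonempty hne hterm
  rw [aux_telescope N hN, ← Finset.sum_mul] at hsum
  rw [lt_div_iff₀ hL]
  exact hsum
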